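/- Let H ⊆ {1,…,c} be the set from Proposition 1 (d_i² < d_H² for i ∈ H, d_i² ≥ d_H² for i ∉ H, where d_H² = (β + Σ_{j∈H}α_j)/(Σ_{j∈H}α_j/d_j²)). Then the memberships u_i = (α_i/β)(d_H²/d_i² − 1) for i ∈ H, u_i = 0 otherwise, minimize J(u) = Σ_{i=1}^c (u_i²/(2α_i) + u_i/β) d_i² over all u ∈ ℝ^c with u_i ≥ 0 and Σ_i u_i = 1. -/

import Mathlib

theorem stmt19 (c : ℕ) (d α : Fin c → ℝ) (β : ℝ)
    (hd : ∀ i, 0 < d i) (hα : ∀ i, 0 < α i) (hαsum : ∑ i, α i = 1) (hβ : 0 < β)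
    (H : Finset (Fin c)) (hH : H.Nonempty)
    (dH2 : ℝ) (hdH2 : dH2 = (β + ∑ j ∈ H, α j) / (∑ j ∈ H, α j / (d j) ^ 2))
    (hin : ∀ i ∈ H, (d i) ^ 2 < dH2) (hout : ∀ i ∉ H, (d i) ^ 2 ≥ dH2)
    (u : Fin c → ℝ)
    (hu : ∀ i, u i = if i ∈ H then (α i / β) * (dH2 / (d i) ^ 2 - 1) else 0) :
    ∀ w : Fin c → ℝ, (∀ i, 0 ≤ w i) → (∑ i, w i = 1) →
      ∑ i, ((u i) ^ 2 / (2 * α i) + u i / β) * (d i) ^ 2 ≤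
        ∑ i, ((w i) ^ 2 / (2 * α i) + w i / β) * (d i) ^ 2 := by
  intro w hw hwsum
  have hβ' : β ≠ 0 := ne_of_gt hβ
  have hd2 : ∀ i, (0:ℝ) < (d i) ^ 2 := fun i => pow_pos (hd i) 2
  set S := ∑ j ∈ H, α j / (d j) ^ 2 with hS
  have hSpos : 0 < S :=
    Finset.sum_pos (fun j _ => div_pos (hα j) (hd2 j)) hH
  have hdH2S : dH2 * S = β + ∑ j ∈ H, α j := by
    rw [hdH2]; field_simp
  -- ∑ u = 1
  have husum : ∑ i, u i = 1 := by
    have h1 : ∑ i, u i = ∑ i ∈ H, (α i / β) * (dH2 / (d i) ^ 2 - 1) := by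
      rw [← Finset.sum_subset (Finset.subset_univ H)
        (fun i _ hi => by rw [hu i, if_neg hi])]
      exact Finset.sum_congr rfl fun i hi => by rw [hu i, if_pos hi]
    have h2 : ∀ i ∈ H, (α i / β) * (dH2 / (d i) ^ 2 - 1)
        = (dH2 * (α i / (d i) ^ 2) - α i) / β := by
      intro i _
      field_simp
    rw [h1, Finset.sum_congr rfl h2, ← Finset.sum_div]
    rw [show ∑ i ∈ H, (dH2 * (α i / (d i) ^ 2) - α i)
        = dH2 * S - ∑ i ∈ H, α i by
      rw [Finset.sum_sub_distrib, Finset.mul_sum]]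
    rw [hdH2S]
    field_simp
    ring
  -- gradient
  set g : Fin c → ℝ := fun i => u i * (d i) ^ 2 / α i + (d i) ^ 2 / β with hg
  have hgH : ∀ i ∈ H, g i = dH2 / β := by
    intro i hi
    have hui : u i = (α i / β) * (dH2 / (d i) ^ 2 - 1) := by rw [hu i, if_pos hi]
    simp only [hg, hui]
    have hαi := (hα i).ne'
    have hdi := (hd2 i).ne'
    have hdi' := (hd i).ne'
    field_simp
    ring
  have hgout : ∀ i ∉ H, g i = (d i) ^ 2 / β := by
    intro i hi
    have hui : u i = 0 := by rw [hu i, if_neg hi]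
    simp [hg, hui]
  -- per-term decomposition
  have hdiff : ∀ i, ((w i) ^ 2 / (2 * α i) + w i / β) * (d i) ^ 2
      - ((u i) ^ 2 / (2 * α i) + u i / β) * (d i) ^ 2
      = (w i - u i) * g i + (w i - u i) ^ 2 * ((d i) ^ 2 / (2 * α i)) := by
    intro i
    have hαi := (hα i).ne'
    simp only [hg]
    field_simp
    ring
  have hsq : 0 ≤ ∑ i, (w i - u i) ^ 2 * ((d i) ^ 2 / (2 * α i)) := by
    apply Finset.sum_nonneg
    intro i _
    exact mul_nonneg (sq_nonneg _)
      (div_nonneg (hd2 i).le (by have := hα i; linarith))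
  have hlin : 0 ≤ ∑ i, (w i - u i) * g i := by
    have hsplit : ∀ i, (w i - u i) * g i
        = (w i - u i) * (g i - dH2 / β) + (w i - u i) * (dH2 / β) := by
      intro i; ring
    rw [Finset.sum_congr rfl (fun i _ => hsplit i), Finset.sum_add_distrib]
    have h0 : ∑ i, (w i - u i) * (dH2 / β) = 0 := by
      rw [← Finset.sum_mul, Finset.sum_sub_distrib, hwsum, husum]
      ring
    rw [h0, add_zero]
    apply Finset.sum_nonneg
    intro i _
    by_cases hi : i ∈ H
    · rw [hgH i hi]; simp
    · have hui : u i = 0 := by rw [hu i, if_neg hi]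
      rw [hgout i hi, hui, sub_zero]
      apply mul_nonneg (hw i)
      have := hout i hi
      have : dH2 / β ≤ (d i) ^ 2 / β := by gcongr
      linarith
  have hsum : ∑ i, (((w i) ^ 2 / (2 * α i) + w i / β) * (d i) ^ 2
      - ((u i) ^ 2 / (2 * α i) + u i / β) * (d i) ^ 2)
      = ∑ i, (w i - u i) * g i + ∑ i, (w i - u i) ^ 2 * ((d i) ^ 2 / (2 * α i)) := by
    rw [Finset.sum_congr rfl (fun i _ => hdiff i), Finset.sum_add_distrib]
  rw [Finset.sum_sub_distrib] at hsum
  linarith
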